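/- arXiv:2201.02917 — 2 statements merged into one kernel-verified Lean document; each statement's English description precedes it below -/
import Mathlib

section
/- Suppose for each j ∈ [1,n], F_j ∈ R[x_1,…,x_n] is a polynomial not involving x_j, irreducible in R[x_1,…,x_n] and not divisible by any variable x_i, with x'_j = F_j/x_j ∈ 𝔽 (encoding F̂_j = F_j), and suppose that for each j ∈ [1,n−1] the lexicographically smallest monomial of F_j has the form x^{v_j} = x_{j+1}^{v_{j+1,j}}⋯x_n^{v_{n,j}} with nonnegative exponents, while for j = n the lexicographically smallest monomial of F_n is 1 (i.e., F_n has nonzero constant term which is its lex-smallest term). Then the standard monomials {x^{(a)} : a ∈ ℤ^n} are R-linearly independent in 𝔽 and their R-linear span equals the lower bound L(Σ) = R[x_1, x'_1,…,x_n, x'_n]; that is, the standard monomials form an R-module basis of L(Σ). -/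
open MvPolynomial

/-- The ambient field `𝔽 = Frac(R[x_1, …, x_n])`. -/
noncomputable abbrev AmbientField (R : Type*) [CommRing R] [IsDomain R] (n : ℕ) :=
  FractionRing (MvPolynomial (Fin n) R)

/-- The cluster variable `x_i` viewed inside the ambient field. -/
noncomputable def xv (R : Type*) [CommRing R] [IsDomain R] {n : ℕ} (i : Fin n) :
    AmbientField R n :=
  algebraMap (MvPolynomial (Fin n) R) (AmbientField R n) (MvPolynomial.X i)

/-- The canonical embedding of polynomials into the ambient field. -/
noncomputable def toAmbient (R : Type*) [CommRing R] [IsDomain R] {n : ℕ}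
    (F : MvPolynomial (Fin n) R) : AmbientField R n :=
  algebraMap (MvPolynomial (Fin n) R) (AmbientField R n) F

/-- The standard monomial `x^{(a)} = ∏ i x_i^{(a_i)}`, where `x_i^{(a_i)} = x_i^{a_i}` if
`a_i ≥ 0` and `x_i^{(a_i)} = (x'_i)^{-a_i}` if `a_i < 0`. -/
noncomputable def stdMon {R : Type*} [CommRing R] [IsDomain R] {n : ℕ}
    (x' : Fin n → AmbientField R n) (a : Fin n → ℤ) : AmbientField R n :=
  ∏ i : Fin n, if 0 ≤ a i then xv R i ^ (a i).toNat else (x' i) ^ (-(a i)).toNat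

section AuxMin

variable {R : Type*} [CommRing R] {n : ℕ}

/-- `b` is the lex-minimal exponent of `P`, and its coefficient is nonzero. -/
def MinAt (P : MvPolynomial (Fin n) R) (b : Fin n →₀ ℕ) : Prop :=
  P.coeff b ≠ 0 ∧ ∀ m ∈ P.support, toLex b ≤ toLex m

theorem MinAt.coeff_eq_zero {P : MvPolynomial (Fin n) R} {b c : Fin n →₀ ℕ}
    (h : MinAt P b) (hc : toLex c < toLex b) : P.coeff c = 0 := by
  by_contra h0
  exact absurd (h.2 c (MvPolynomial.mem_support_iff.mpr h0)) (not_le.mpr hc)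

theorem minAt_monomial [Nontrivial R] (m : Fin n →₀ ℕ) :
    MinAt (MvPolynomial.monomial m (1 : R)) m := by
  constructor
  · simp [MvPolynomial.coeff_monomial]
  · intro c hc
    have hcc := MvPolynomial.mem_support_iff.mp hc
    rw [MvPolynomial.coeff_monomial] at hcc
    by_cases h : m = c
    · exact le_of_eq (congrArg toLex h)
    · simp [h] at hcc

theorem minAt_one [Nontrivial R] : MinAt (1 : MvPolynomial (Fin n) R) 0 := by
  have h := minAt_monomial (R := R) (n := n) 0
  rwa [MvPolynomial.monomial_zero', map_one] at h

set_option maxHeartbeats 1000000 in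
theorem MinAt.mul [IsDomain R] {P Q : MvPolynomial (Fin n) R} {b c : Fin n →₀ ℕ}
    (hP : MinAt P b) (hQ : MinAt Q c) :
    MinAt (P * Q) (b + c) ∧ (P * Q).coeff (b + c) = P.coeff b * Q.coeff c := by
  classical
  have hcoeff : (P * Q).coeff (b + c) = P.coeff b * Q.coeff c := by
    rw [MvPolynomial.coeff_mul]
    refine Finset.sum_eq_single_of_mem (b, c) (Finset.HasAntidiagonal.mem_antidiagonal.mpr rfl) ?_
    rintro ⟨u, w⟩ huw hne
    rw [Finset.HasAntidiagonal.mem_antidiagonal] at huw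
    by_contra h0
    have hu : u ∈ P.support := MvPolynomial.mem_support_iff.mpr fun h => h0 (by simp [h])
    have hw : w ∈ Q.support := MvPolynomial.mem_support_iff.mpr fun h => h0 (by simp [h])
    have h1 := hP.2 u hu
    have h2 := hQ.2 w hw
    have hsum : toLex u + toLex w = toLex b + toLex c := by
      rw [← toLex_add, ← toLex_add, huw]
    have h3 : toLex u + toLex w ≤ toLex b + toLex w := by
      rw [hsum]; exact add_le_add_right h2 _
    have h4 : toLex u = toLex b := le_antisymm (le_of_add_le_add_right h3) h1
    have hub : u = b := toLex.injective h4
    have hwc : w = c := by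
      have h5 : toLex w = toLex c := by
        have h6 := hsum
        rw [h4] at h6
        exact add_left_cancel h6
      exact toLex.injective h5
    exact hne (by rw [hub, hwc])
  refine ⟨⟨by rw [hcoeff]; exact mul_ne_zero hP.1 hQ.1, ?_⟩, hcoeff⟩
  intro m hm
  have hmem := MvPolynomial.support_mul P Q hm
  rw [Finset.mem_add] at hmem
  obtain ⟨u, hu, w, hw, rfl⟩ := hmem
  calc toLex (b + c) = toLex b + toLex c := toLex_add _ _
    _ ≤ toLex u + toLex w := add_le_add (hP.2 u hu) (hQ.2 w hw)
    _ = toLex (u + w) := (toLex_add _ _).symm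

theorem minAt_pow [IsDomain R] {P : MvPolynomial (Fin n) R} {b : Fin n →₀ ℕ}
    (h : MinAt P b) (k : ℕ) :
    MinAt (P ^ k) (k • b) ∧ (P ^ k).coeff (k • b) = P.coeff b ^ k := by
  induction k with
  | zero =>
    constructor
    · simpa using minAt_one
    · simp
  | succ k IH =>
    rw [pow_succ, succ_nsmul]
    have h2 := IH.1.mul h
    exact ⟨h2.1, by rw [h2.2, IH.2, pow_succ]⟩

theorem minAt_prod [IsDomain R] {ι : Type*} (s : Finset ι) (P : ι → MvPolynomial (Fin n) R)
    (b : ι → (Fin n →₀ ℕ)) (h : ∀ j ∈ s, MinAt (P j) (b j)) :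
    MinAt (∏ j ∈ s, P j) (∑ j ∈ s, b j) ∧
      (∏ j ∈ s, P j).coeff (∑ j ∈ s, b j) = ∏ j ∈ s, (P j).coeff (b j) := by
  classical
  induction s using Finset.cons_induction with
  | empty =>
    constructor
    · simpa using minAt_one
    · simp
  | cons a s ha IH =>
    rw [Finset.prod_cons, Finset.sum_cons, Finset.prod_cons]
    have hrest := IH fun j hj => h j (Finset.mem_cons_of_mem hj)
    have h2 := (h a (Finset.mem_cons_self a s)).mul hrest.1
    exact ⟨h2.1, by rw [h2.2, hrest.2]⟩

end AuxMin

section AuxHom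

variable (R : Type*) [CommRing R] [IsDomain R] {n : ℕ}

theorem toAmbient_mul (P Q : MvPolynomial (Fin n) R) :
    toAmbient R (P * Q) = toAmbient R P * toAmbient R Q := map_mul _ _ _

theorem toAmbient_pow (P : MvPolynomial (Fin n) R) (k : ℕ) :
    toAmbient R (P ^ k) = toAmbient R P ^ k := map_pow _ _ _

theorem toAmbient_one : toAmbient R (1 : MvPolynomial (Fin n) R) = 1 := map_one _

theorem toAmbient_X (i : Fin n) : toAmbient R (MvPolynomial.X i) = xv R i := rfl

theorem toAmbient_prod {ι : Type*} (s : Finset ι) (P : ι → MvPolynomial (Fin n) R) :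
    toAmbient R (∏ j ∈ s, P j) = ∏ j ∈ s, toAmbient R (P j) := map_prod _ _ _

theorem toAmbient_sum {ι : Type*} (s : Finset ι) (P : ι → MvPolynomial (Fin n) R) :
    toAmbient R (∑ j ∈ s, P j) = ∑ j ∈ s, toAmbient R (P j) := map_sum _ _ _

theorem toAmbient_smul (c : R) (Q : MvPolynomial (Fin n) R) :
    toAmbient R (c • Q) = c • toAmbient R Q := by
  unfold toAmbient
  rw [Algebra.smul_def, map_mul, ← IsScalarTower.algebraMap_apply, ← Algebra.smul_def]

theorem toAmbient_injective : Function.Injective (toAmbient R (n := n)) :=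
  IsFractionRing.injective _ _

theorem toAmbient_monomial_one (m : Fin n →₀ ℕ) :
    toAmbient R (MvPolynomial.monomial m (1 : R)) = ∏ i, xv R i ^ (m i) := by
  rw [MvPolynomial.monomial_eq, map_one, one_mul,
    Finsupp.prod_fintype _ _ (fun i => pow_zero _), toAmbient_prod]
  exact Finset.prod_congr rfl fun i _ => by rw [toAmbient_pow, toAmbient_X]

end AuxHom

set_option maxHeartbeats 2000000 in
/-- Under `F̂_j = F_j` and the hypothesis that the lex-smallest monomial of
each `F_j` only involves the variables `x_i` with `i > j` (so it is `1` for `j = n`), the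
standard monomials `x^{(a)}`, `a ∈ ℤ^n`, are `R`-linearly independent and span the lower
bound `L(Σ) = R[x_1, x'_1, …, x_n, x'_n]`; i.e. they form an `R`-module basis of `L(Σ)`. -/
theorem statement7 {R : Type*} [CommRing R] [IsDomain R] [UniqueFactorizationMonoid R]
    {n : ℕ} [NeZero n]
    (F : Fin n → MvPolynomial (Fin n) R)
    -- `F j` does not involve `x_j`
    (hFx : ∀ j, ∀ m ∈ (F j).support, m j = 0)
    -- each `F j` is irreducible in `R[x_1,…,x_n]`
    (hFirr : ∀ j, Irreducible (F j))
    -- no `F j` is divisible by a variable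
    (hFvar : ∀ j i, ¬ (MvPolynomial.X i ∣ F j))
    -- `x'_j = F_j / x_j` (encoding `F̂_j = F_j`)
    (x' : Fin n → AmbientField R n)
    (hx' : ∀ j, x' j = toAmbient R (F j) / xv R j)
    -- `v j` is the lexicographically smallest monomial of `F j`
    (v : Fin n → (Fin n →₀ ℕ))
    (hvmem : ∀ j, v j ∈ (F j).support)
    (hvmin : ∀ j, ∀ m ∈ (F j).support, toLex (v j) ≤ toLex m)
    -- and it only involves the variables `x_i` with `i > j`
    (hvform : ∀ j, ∀ i ≤ j, v j i = 0) :
    LinearIndependent R (stdMon x') ∧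
      Submodule.span R (Set.range (stdMon x')) =
        Subalgebra.toSubmodule (Algebra.adjoin R
          (⋃ i : Fin n, ({xv R i, x' i} : Set (AmbientField R n)))) := by
  classical
  have hinj : Function.Injective (algebraMap (MvPolynomial (Fin n) R) (AmbientField R n)) :=
    IsFractionRing.injective _ _
  have hxv0 : ∀ i : Fin n, xv R i ≠ 0 := by
    intro i h
    refine MvPolynomial.X_ne_zero (R := R) i (hinj ?_)
    rw [map_zero]; exact h
  have hF0 : ∀ j : Fin n, toAmbient R (F j) ≠ 0 := by
    intro j h
    exact (hFirr j).ne_zero (hinj (by rw [map_zero]; exact h))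
  -- the zpow normal form of the factors of a standard monomial
  have hfac : ∀ (i : Fin n) (c : ℤ),
      (if 0 ≤ c then xv R i ^ c.toNat else x' i ^ (-c).toNat)
        = xv R i ^ c * toAmbient R (F i) ^ (max (-c) 0) := by
    intro i c
    rcases le_or_gt 0 c with hc | hc
    · rw [if_pos hc, max_eq_right (by omega : -c ≤ (0:ℤ)), zpow_zero, mul_one,
        ← zpow_natCast, Int.toNat_of_nonneg hc]
    · have hk : (((-c).toNat : ℤ)) = -c := Int.toNat_of_nonneg (by omega)
      have h1 : toAmbient R (F i) ^ (-c) = toAmbient R (F i) ^ (-c).toNat := by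
        rw [← zpow_natCast, hk]
      have h2 : xv R i ^ c = (xv R i ^ (-c).toNat)⁻¹ := by
        rw [← zpow_natCast, ← zpow_neg, hk, neg_neg]
      rw [if_neg (not_le.mpr hc), hx' i, div_pow, max_eq_left (by omega : (0:ℤ) ≤ -c),
        h1, h2, div_eq_mul_inv]
      exact mul_comm _ _
  -- the zpow normal form of standard monomials
  have hstd : ∀ a : Fin n → ℤ, stdMon x' a
      = (∏ i, xv R i ^ a i) * ∏ i, toAmbient R (F i) ^ (max (-(a i)) 0) := by
    intro a
    simp only [stdMon]
    rw [← Finset.prod_mul_distrib]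
    exact Finset.prod_congr rfl fun i _ => hfac i (a i)
  set S := Submodule.span R (Set.range (stdMon x')) with hS
  have hstd_mem : ∀ a, stdMon x' a ∈ S := fun a => Submodule.subset_span ⟨a, rfl⟩
  -- helper: pulling one modified exponent out of a product
  have hprodup : ∀ (f : Fin n → AmbientField R n), (∀ j, f j ≠ 0) →
      ∀ (c : Fin n → ℤ) (i : Fin n) (d : ℤ),
      (∏ j, f j ^ (c j + if j = i then d else 0)) = f i ^ d * ∏ j, f j ^ c j := by
    intro f hf c i d
    have h1 : ∀ j ∈ Finset.univ, f j ^ (c j + if j = i then d else 0)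
        = (if j = i then f i ^ d else 1) * f j ^ c j := by
      intro j _
      by_cases h : j = i
      · subst h; rw [if_pos rfl, if_pos rfl, zpow_add₀ (hf j), mul_comm]
      · rw [if_neg h, if_neg h, add_zero, one_mul]
    rw [Finset.prod_congr rfl h1, Finset.prod_mul_distrib]
    congr 1
    simp
  -- one multiplication step
  have hstep : ∀ (a : Fin n → ℤ) (i : Fin n),
      xv R i * stdMon x' a
        = (if 0 ≤ a i then 1 else toAmbient R (F i))
            * stdMon x' (Function.update a i (a i + 1)) := by
    intro a i
    rw [hstd, hstd]
    have ha' : ∀ j, Function.update a i (a i + 1) j = a j + if j = i then 1 else 0 := by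
      intro j; by_cases h : j = i
      · subst h; rw [Function.update_self, if_pos rfl]
      · rw [Function.update_of_ne h, if_neg h, add_zero]
    have hg' : ∀ j, max (-(Function.update a i (a i + 1) j)) 0
        = max (-(a j)) 0 + if j = i then (if 0 ≤ a i then 0 else -1) else 0 := by
      intro j; by_cases h : j = i
      · subst h
        rw [Function.update_self, if_pos rfl]
        by_cases h2 : 0 ≤ a j
        · rw [if_pos h2]; omega
        · rw [if_neg h2]; omega
      · rw [Function.update_of_ne h, if_neg h, add_zero]
    rw [show (∏ j, xv R j ^ (Function.update a i (a i + 1) j))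
        = xv R i ^ (1:ℤ) * ∏ j, xv R j ^ a j from by
      rw [Finset.prod_congr rfl fun j _ => by rw [ha' j]]; exact hprodup _ hxv0 a i 1]
    rw [show (∏ j, toAmbient R (F j) ^ (max (-(Function.update a i (a i + 1) j)) 0))
        = toAmbient R (F i) ^ (if 0 ≤ a i then (0:ℤ) else -1)
            * ∏ j, toAmbient R (F j) ^ (max (-(a j)) 0) from by
      rw [Finset.prod_congr rfl fun j _ => by rw [hg' j]]; exact hprodup _ hF0 _ i _]
    by_cases h : 0 ≤ a i
    · rw [if_pos h, if_pos h, zpow_zero, zpow_one, one_mul, one_mul]; ring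
    · rw [if_neg h, if_neg h, zpow_one, zpow_neg_one]
      field_simp
      rw [mul_div_cancel_right₀ _ (hF0 i)]
  -- bookkeeping for the weight
  have hNup : ∀ (a : Fin n → ℤ) (i : Fin n),
      (∑ j, (-(Function.update a i (a i + 1) j)).toNat) + (if 0 ≤ a i then 0 else 1)
        = ∑ j, (-(a j)).toNat := by
    intro a i
    rw [← Finset.add_sum_erase _ (fun j => (-(Function.update a i (a i + 1) j)).toNat)
        (Finset.mem_univ i),
      ← Finset.add_sum_erase _ (fun j => (-(a j)).toNat) (Finset.mem_univ i)]
    have he : ∑ j ∈ Finset.univ.erase i, (-(Function.update a i (a i + 1) j)).toNat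
        = ∑ j ∈ Finset.univ.erase i, (-(a j)).toNat :=
      Finset.sum_congr rfl fun j hj => by
        rw [Function.update_of_ne (Finset.ne_of_mem_erase hj)]
    rw [he, Function.update_self]
    by_cases h : 0 ≤ a i
    · rw [if_pos h]; omega
    · rw [if_neg h]; omega
  -- the spanning engine
  have main : ∀ (k : ℕ) (a : Fin n → ℤ), (∑ j, (-(a j)).toNat) ≤ k →
      ∀ P : MvPolynomial (Fin n) R, toAmbient R P * stdMon x' a ∈ S := by
    intro k
    induction k using Nat.strong_induction_on with
    | _ k IHk =>
    have hzerocase : ∀ a : Fin n → ℤ, toAmbient R (MvPolynomial.monomial 0 (1:R))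
        * stdMon x' a ∈ S := by
      intro a
      rw [MvPolynomial.monomial_zero', MvPolynomial.C_1, toAmbient_one, one_mul]
      exact hstd_mem a
    have mono : ∀ (d : ℕ) (m : Fin n →₀ ℕ), (∑ j, m j) ≤ d →
        ∀ a : Fin n → ℤ, (∑ j, (-(a j)).toNat) ≤ k →
        toAmbient R (MvPolynomial.monomial m 1) * stdMon x' a ∈ S := by
      intro d
      induction d with
      | zero =>
        intro m hm a _
        have hm0 : m = 0 := by
          have hz : ∀ j, m j = 0 := by
            intro j
            have h' : m j ≤ ∑ x : Fin n, m x :=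
              Finset.single_le_sum (fun x _ => Nat.zero_le (m x)) (Finset.mem_univ j)
            omega
          exact Finsupp.ext fun j => by simp [hz j]
        rw [hm0]; exact hzerocase a
      | succ d IH =>
        intro m hm a ha
        by_cases hm0 : m = 0
        · rw [hm0]; exact hzerocase a
        · obtain ⟨i, hi⟩ : ∃ i, m i ≠ 0 := by
            by_contra hc
            push_neg at hc
            exact hm0 (Finsupp.ext fun j => by simp [hc j])
          set m' : Fin n →₀ ℕ := m - Finsupp.single i 1 with hm'
          have hmm : m' + Finsupp.single i 1 = m :=
            tsub_add_cancel_of_le (Finsupp.single_le_iff.mpr (by omega))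
          have hsplit : MvPolynomial.monomial m' (1:R) * MvPolynomial.X i
              = MvPolynomial.monomial m 1 := by
            rw [MvPolynomial.X, MvPolynomial.monomial_mul, mul_one, hmm]
          have hdeg : (∑ j, m' j) ≤ d := by
            have hsm : (∑ j, m j) = (∑ j, m' j) + 1 := by
              rw [← hmm]
              simp [Finsupp.add_apply, Finset.sum_add_distrib, Finsupp.single_apply]
            omega
          rw [← hsplit, toAmbient_mul, toAmbient_X, mul_assoc, hstep a i]
          by_cases hai : 0 ≤ a i
          · rw [if_pos hai, one_mul]
            refine IH m' hdeg _ ?_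
            have := hNup a i
            rw [if_pos hai] at this
            omega
          · rw [if_neg hai, ← mul_assoc, ← toAmbient_mul]
            have hlt : (∑ j, (-(Function.update a i (a i + 1) j)).toNat) < k := by
              have := hNup a i
              rw [if_neg hai] at this
              omega
            exact IHk _ hlt _ le_rfl _
    intro a ha P
    rw [P.as_sum, toAmbient_sum, Finset.sum_mul]
    refine Submodule.sum_mem _ fun m hm => ?_
    have h1 : MvPolynomial.monomial m (P.coeff m) = P.coeff m • MvPolynomial.monomial m 1 := by
      rw [MvPolynomial.smul_monomial, smul_eq_mul, mul_one]
    rw [h1, toAmbient_smul, smul_mul_assoc]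
    exact Submodule.smul_mem _ _ (mono _ m le_rfl a ha)
  -- products of two standard monomials
  have hmulstd : ∀ a b : Fin n → ℤ, stdMon x' a * stdMon x' b ∈ S := by
    intro a b
    set t : Fin n → ℤ := fun j => max (-(a j)) 0 + max (-(b j)) 0 - max (-(a j + b j)) 0 with ht
    have ht0 : ∀ j, 0 ≤ t j := by intro j; simp only [ht]; omega
    have key : stdMon x' a * stdMon x' b
        = toAmbient R (∏ j, F j ^ ((t j).toNat)) * stdMon x' (a + b) := by
      rw [hstd a, hstd b, hstd (a + b), toAmbient_prod]
      have hpw : ∀ j, toAmbient R (F j ^ ((t j).toNat)) = toAmbient R (F j) ^ (t j) := by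
        intro j
        rw [toAmbient_pow, ← zpow_natCast, Int.toNat_of_nonneg (ht0 j)]
      rw [Finset.prod_congr rfl fun j _ => hpw j]
      trans (∏ j, (xv R j ^ (a j) * toAmbient R (F j) ^ (max (-(a j)) 0)
          * (xv R j ^ (b j) * toAmbient R (F j) ^ (max (-(b j)) 0))))
      · rw [← Finset.prod_mul_distrib, ← Finset.prod_mul_distrib, ← Finset.prod_mul_distrib]
      · rw [← Finset.prod_mul_distrib, ← Finset.prod_mul_distrib]
        refine Finset.prod_congr rfl fun j _ => ?_
        have hx12 : xv R j ^ (a j) * xv R j ^ (b j) = xv R j ^ ((a + b) j) := by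
          rw [Pi.add_apply, zpow_add₀ (hxv0 j)]
        have h2 : toAmbient R (F j) ^ (t j) * toAmbient R (F j) ^ (max (-((a + b) j)) 0)
            = toAmbient R (F j) ^ (max (-(a j)) 0) * toAmbient R (F j) ^ (max (-(b j)) 0) := by
          rw [← zpow_add₀ (hF0 j), ← zpow_add₀ (hF0 j)]
          congr 1
          simp only [ht, Pi.add_apply]
          omega
        calc xv R j ^ (a j) * toAmbient R (F j) ^ (max (-(a j)) 0)
              * (xv R j ^ (b j) * toAmbient R (F j) ^ (max (-(b j)) 0))
            = xv R j ^ (a j) * xv R j ^ (b j)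
              * (toAmbient R (F j) ^ (max (-(a j)) 0) * toAmbient R (F j) ^ (max (-(b j)) 0)) :=
              mul_mul_mul_comm _ _ _ _
          _ = xv R j ^ (a j) * xv R j ^ (b j)
              * (toAmbient R (F j) ^ (t j) * toAmbient R (F j) ^ (max (-((a + b) j)) 0)) := by
              rw [h2]
          _ = toAmbient R (F j) ^ (t j)
              * (xv R j ^ (a j) * xv R j ^ (b j) * toAmbient R (F j) ^ (max (-((a + b) j)) 0)) :=
              mul_left_comm _ _ _
          _ = toAmbient R (F j) ^ (t j)
              * (xv R j ^ ((a + b) j) * toAmbient R (F j) ^ (max (-((a + b) j)) 0)) := by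
              rw [hx12]
    rw [key]
    exact main _ (a + b) le_rfl _
  have hone : (1 : AmbientField R n) ∈ S := by
    have h0 : stdMon x' 0 = 1 := by simp [stdMon]
    rw [← h0]; exact hstd_mem 0
  have hmulS : ∀ x y : AmbientField R n, x ∈ S → y ∈ S → x * y ∈ S := by
    have h2 : S * S ≤ S := by
      rw [hS, Submodule.span_mul_span]
      refine Submodule.span_le.mpr ?_
      rintro z hz
      rw [Set.mem_mul] at hz
      obtain ⟨u, hu, w, hw, rfl⟩ := hz
      obtain ⟨a, rfl⟩ := hu
      obtain ⟨c, rfl⟩ := hw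
      exact hmulstd a c
    intro x y hx hy
    exact h2 (Submodule.mul_mem_mul hx hy)
  have hgen1 : ∀ i : Fin n, stdMon x' (fun j => if j = i then 1 else 0) = xv R i := by
    intro i
    simp only [stdMon]
    rw [Finset.prod_eq_single i]
    · simp
    · intro j _ hj; simp [hj]
    · intro h; exact absurd (Finset.mem_univ i) h
  have hgen2 : ∀ i : Fin n, stdMon x' (fun j => if j = i then -1 else 0) = x' i := by
    intro i
    simp only [stdMon]
    rw [Finset.prod_eq_single i]
    · norm_num
    · intro j _ hj; simp [hj]
    · intro h; exact absurd (Finset.mem_univ i) h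
  -- the subalgebra structure on S
  refine ⟨?_, ?_⟩
  · -- linear independence
    rw [linearIndependent_iff']
    intro s g hsum i0 hi0
    by_contra hgi
    set M : Fin n → ℕ := fun i => s.sup fun a => (-(a i)).toNat with hM
    have hMa : ∀ a ∈ s, ∀ i, 0 ≤ (M i : ℤ) + a i := by
      intro a ha i
      have h1 : (-(a i)).toNat ≤ M i := Finset.le_sup (f := fun a => (-(a i)).toNat) ha
      omega
    set mA : (Fin n → ℤ) → (Fin n →₀ ℕ) :=
      fun a => Finsupp.equivFunOnFinite.symm (fun i => ((M i : ℤ) + a i).toNat) with hmA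
    have hmA_apply : ∀ a i, mA a i = ((M i : ℤ) + a i).toNat := fun a i => rfl
    set P : (Fin n → ℤ) → MvPolynomial (Fin n) R :=
      fun a => MvPolynomial.monomial (mA a) 1 * ∏ j, F j ^ ((-(a j)).toNat) with hP
    set bb : (Fin n → ℤ) → (Fin n →₀ ℕ) :=
      fun a => mA a + ∑ j, ((-(a j)).toNat) • v j with hbb
    set cc : (Fin n → ℤ) → R := fun a => ∏ j, (F j).coeff (v j) ^ ((-(a j)).toNat) with hcc
    have hFv : ∀ j, MinAt (F j) (v j) :=
      fun j => ⟨MvPolynomial.mem_support_iff.mp (hvmem j), hvmin j⟩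
    have hMin : ∀ a, MinAt (P a) (bb a) ∧ (P a).coeff (bb a) = cc a := by
      intro a
      have h2 := minAt_prod Finset.univ (fun j => F j ^ ((-(a j)).toNat))
        (fun j => ((-(a j)).toNat) • v j) (fun j _ => (minAt_pow (hFv j) _).1)
      have h3 := (minAt_monomial (mA a)).mul h2.1
      refine ⟨h3.1, ?_⟩
      rw [hP]
      simp only []
      rw [h3.2, h2.2]
      rw [MvPolynomial.coeff_monomial, if_pos rfl, one_mul]
      rw [hcc]
      exact Finset.prod_congr rfl fun j _ => (minAt_pow (hFv j) _).2
    -- the key identity in the ambient field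
    have hkey : ∀ a ∈ s, toAmbient R (P a) = (∏ i, xv R i ^ (M i)) * stdMon x' a := by
      intro a ha
      rw [hP]
      simp only []
      rw [toAmbient_mul, toAmbient_monomial_one, toAmbient_prod, hstd a]
      have hpw : ∀ j, toAmbient R (F j ^ ((-(a j)).toNat))
          = toAmbient R (F j) ^ (max (-(a j)) 0) := by
        intro j
        rw [toAmbient_pow, ← zpow_natCast, Int.toNat_eq_max]
      rw [Finset.prod_congr rfl fun j _ => hpw j, ← mul_assoc]
      congr 1
      rw [← Finset.prod_mul_distrib]
      refine Finset.prod_congr rfl fun i _ => ?_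
      rw [hmA_apply, ← zpow_natCast (xv R i) (M i), ← zpow_natCast, Int.toNat_of_nonneg (hMa a ha i),
        zpow_add₀ (hxv0 i)]
    have hPsum : ∑ a ∈ s, g a • P a = 0 := by
      apply hinj
      rw [map_zero]
      have h0 : toAmbient R (∑ a ∈ s, g a • P a) = 0 := by
        rw [toAmbient_sum]
        calc ∑ a ∈ s, toAmbient R (g a • P a)
            = ∑ a ∈ s, g a • ((∏ i, xv R i ^ (M i)) * stdMon x' a) :=
              Finset.sum_congr rfl fun a ha => by rw [toAmbient_smul, hkey a ha]
          _ = (∏ i, xv R i ^ (M i)) * ∑ a ∈ s, g a • stdMon x' a := by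
              rw [Finset.mul_sum]
              exact Finset.sum_congr rfl fun a _ => (mul_smul_comm _ _ _).symm
          _ = 0 := by rw [hsum, mul_zero]
      exact h0
    -- injectivity of the leading exponents
    have hbinj : ∀ a ∈ s, ∀ a' ∈ s, bb a = bb a' → a = a' := by
      intro a ha a' ha' hb
      have hstep2 : ∀ i : Fin n, (∀ j, j < i → a j = a' j) → a i = a' i := by
        intro i IH
        have h0 : (bb a) i = (bb a') i := by rw [hb]
        have h1 : mA a i + ∑ j, (-(a j)).toNat * v j i
            = mA a' i + ∑ j, (-(a' j)).toNat * v j i := by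
          simpa [hbb, Finsupp.add_apply, Finsupp.finset_sum_apply, Finsupp.smul_apply,
            smul_eq_mul] using h0
        have h2 : ∑ j, (-(a j)).toNat * v j i = ∑ j, (-(a' j)).toNat * v j i := by
          refine Finset.sum_congr rfl fun j _ => ?_
          rcases le_or_gt i j with hij | hij
          · rw [hvform j i hij, mul_zero, mul_zero]
          · rw [IH j hij]
        have h3 : mA a i = mA a' i := by omega
        rw [hmA_apply, hmA_apply] at h3
        have h4 := hMa a ha i
        have h5 := hMa a' ha' i
        omega
      have hkey2 : ∀ k : ℕ, ∀ i : Fin n, (i : ℕ) ≤ k → a i = a' i := by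
        intro k
        induction k with
        | zero =>
          intro i hik
          exact hstep2 i fun j hj => absurd (Fin.lt_iff_val_lt_val.mp hj) (by omega)
        | succ k IH =>
          intro i hik
          exact hstep2 i fun j hj => IH j (by have := Fin.lt_iff_val_lt_val.mp hj; omega)
      exact funext fun i => hkey2 i i le_rfl
    set T := s.filter (fun a => g a ≠ 0) with hT
    have hiT : i0 ∈ T := Finset.mem_filter.mpr ⟨hi0, hgi⟩
    obtain ⟨a0, ha0T, hmin0⟩ := T.exists_min_image (fun a => toLex (bb a)) ⟨i0, hiT⟩
    have ha0s : a0 ∈ s := (Finset.mem_filter.mp ha0T).1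
    have hga0 : g a0 ≠ 0 := (Finset.mem_filter.mp ha0T).2
    have hco : (∑ a ∈ s, g a • P a).coeff (bb a0) = g a0 * cc a0 := by
      rw [MvPolynomial.coeff_sum]
      rw [Finset.sum_eq_single a0]
      · rw [MvPolynomial.coeff_smul, (hMin a0).2, smul_eq_mul]
      · intro a ha hne
        rw [MvPolynomial.coeff_smul]
        by_cases hg : g a = 0
        · rw [hg, zero_smul]
        · have haT : a ∈ T := Finset.mem_filter.mpr ⟨ha, hg⟩
          have hne' : bb a ≠ bb a0 := fun h => hne (hbinj a ha a0 ha0s h)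
          have hlt : toLex (bb a0) < toLex (bb a) :=
            lt_of_le_of_ne (hmin0 a haT) fun h => hne' (toLex.injective h.symm)
          rw [(hMin a).1.coeff_eq_zero hlt, smul_zero]
      · intro h; exact absurd ha0s h
    rw [hPsum, MvPolynomial.coeff_zero] at hco
    have hcc0 : cc a0 ≠ 0 := by
      rw [hcc]
      simp only []
      refine Finset.prod_ne_zero_iff.mpr fun j _ => pow_ne_zero _ (hFv j).1
    rcases mul_eq_zero.mp hco.symm with h | h
    · exact hga0 h
    · exact hcc0 h
  · -- the span equals the lower bound
    refine le_antisymm ?_ ?_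
    · refine Submodule.span_le.mpr ?_
      rintro z ⟨a, rfl⟩
      rw [SetLike.mem_coe, Subalgebra.mem_toSubmodule]
      simp only [stdMon]
      refine prod_mem fun i _ => ?_
      by_cases h : 0 ≤ a i
      · rw [if_pos h]
        exact pow_mem (Algebra.subset_adjoin (Set.mem_iUnion.mpr
          ⟨i, Set.mem_insert _ _⟩)) _
      · rw [if_neg h]
        exact pow_mem (Algebra.subset_adjoin (Set.mem_iUnion.mpr
          ⟨i, Set.mem_insert_of_mem _ rfl⟩)) _
    · intro z hz
      rw [Subalgebra.mem_toSubmodule] at hz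
      have hadj : Algebra.adjoin R (⋃ i : Fin n, ({xv R i, x' i} : Set (AmbientField R n)))
          ≤ Submodule.toSubalgebra S hone hmulS := by
        refine Algebra.adjoin_le ?_
        rintro w hw
        rw [Set.mem_iUnion] at hw
        obtain ⟨i, hw⟩ := hw
        simp only [Set.mem_insert_iff, Set.mem_singleton_iff] at hw
        rcases hw with rfl | rfl
        · rw [SetLike.mem_coe, Submodule.mem_toSubalgebra, ← hgen1 i]
          exact hstd_mem _
        · rw [SetLike.mem_coe, Submodule.mem_toSubalgebra, ← hgen2 i]
          exact hstd_mem _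
      have := hadj hz
      rwa [Submodule.mem_toSubalgebra] at this
end

section
/- Suppose for each j ∈ [1,n], F_j ∈ R[x_1,…,x_n] is a polynomial not involving x_j, irreducible in R[x_1,…,x_n] and not divisible by any variable x_i, with x'_j = F_j/x_j ∈ 𝔽 (encoding F̂_j = F_j), and suppose that for each j ∈ [1,n−1] the lexicographically smallest monomial of F_j has the form x^{v_j} = x_{j+1}^{v_{j+1,j}}⋯x_n^{v_{n,j}} with nonnegative exponents, while for j = n the lexicographically smallest monomial of F_n is 1. Then each standard monomial x^{(a)} is a nonzero Laurent polynomial in R[x_1^{±1},…,x_n^{±1}], and whenever a ≺ a' in ℤ^n (lexicographically), the lexicographically smallest monomial of x^{(a)} strictly precedes the lexicographically smallest monomial of x^{(a')}. -/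
open MvPolynomial

/-- The Laurent polynomial ring `R[x_1^{±1},…,x_n^{±1}]`, realized as the monoid algebra of
`ℤ^n` over `R`; its monomials are indexed by exponent vectors in `Fin n →₀ ℤ`. -/
noncomputable abbrev MvLaurent (R : Type*) [CommRing R] (n : ℕ) :=
  AddMonoidAlgebra R (Fin n →₀ ℤ)

/-- The canonical embedding `R[x_1,…,x_n] → R[x_1^{±1},…,x_n^{±1}]`. -/
noncomputable def polyToLaurent (R : Type*) [CommRing R] (n : ℕ) :
    MvPolynomial (Fin n) R →+* MvLaurent R n :=
  AddMonoidAlgebra.mapDomainRingHom R (Finsupp.mapRange.addMonoidHom (Nat.castAddMonoidHom ℤ))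

/-- The variable `x_i` as a Laurent polynomial. -/
noncomputable def xL {R : Type*} [CommRing R] {n : ℕ} (i : Fin n) : MvLaurent R n :=
  AddMonoidAlgebra.single (Finsupp.single i (1 : ℤ)) (1 : R)

/-- The standard monomial `x^{(a)} = ∏ i x_i^{(a_i)}`, where `x_i^{(a_i)} = x_i^{a_i}` if
`a_i ≥ 0` and `x_i^{(a_i)} = (x'_i)^{-a_i}` if `a_i < 0`, as a Laurent polynomial. -/
noncomputable def stdMonL {R : Type*} [CommRing R] {n : ℕ}
    (x' : Fin n → MvLaurent R n) (a : Fin n → ℤ) : MvLaurent R n :=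
  ∏ i : Fin n, if 0 ≤ a i then (xL i : MvLaurent R n) ^ (a i).toNat
    else (x' i) ^ (-(a i)).toNat

/-! ### Auxiliary theory: the lex-minimal element of the support of a Laurent polynomial -/

set_option linter.unusedSectionVars false

/-- Coordinatewise `ℕ → ℤ` cast of exponent vectors. -/
noncomputable def natToInt {n : ℕ} : (Fin n →₀ ℕ) → (Fin n →₀ ℤ) :=
  Finsupp.mapRange Nat.cast Nat.cast_zero

lemma natToInt_injective {n : ℕ} : Function.Injective (natToInt (n := n)) :=
  Finsupp.mapRange_injective _ _ Nat.cast_injective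

lemma natToInt_apply {n : ℕ} (p : Fin n →₀ ℕ) (j : Fin n) : natToInt p j = (p j : ℤ) :=
  Finsupp.mapRange_apply

lemma natToInt_lexMono {n : ℕ} {p q : Fin n →₀ ℕ} (h : toLex p ≤ toLex q) :
    toLex (natToInt p) ≤ toLex (natToInt q) := by
  rcases eq_or_lt_of_le h with he | hlt
  · have : p = q := toLex.injective he
    rw [this]
  · obtain ⟨j, h1, h2⟩ := hlt
    refine le_of_lt ⟨j, fun d hd => ?_, ?_⟩
    · show natToInt p d = natToInt q d
      rw [natToInt_apply, natToInt_apply]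
      have : p d = q d := h1 d hd
      rw [this]
    · show natToInt p j < natToInt q j
      rw [natToInt_apply, natToInt_apply]
      have : p j < q j := h2
      exact_mod_cast this

section MS
variable {R : Type*} [CommRing R] [IsDomain R] {n : ℕ}

/-- `m` is the lex-minimal element of the support of `f`. -/
def MinS (f : MvLaurent R n) (m : Fin n →₀ ℤ) : Prop :=
  m ∈ f.coeff.support ∧ ∀ l ∈ f.coeff.support, toLex m ≤ toLex l

lemma MinS.ne_zero {f : MvLaurent R n} {m} (h : MinS f m) : f ≠ 0 := by
  intro h0; rw [h0] at h; simpa using h.1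

lemma MinS.unique {f : MvLaurent R n} {m m'} (h : MinS f m) (h' : MinS f m') :
    m = m' := by
  have := le_antisymm (h.2 _ h'.1) (h'.2 _ h.1)
  exact toLex.injective this

lemma minS_single (a : Fin n →₀ ℤ) {r : R} (hr : r ≠ 0) :
    MinS (AddMonoidAlgebra.single a r) a := by
  constructor
  · simp [AddMonoidAlgebra.coeff_single, Finsupp.mem_support_iff, hr]
  · intro l hl
    have : l = a := by
      simpa [AddMonoidAlgebra.single, Finsupp.mem_support_iff, Finsupp.single_apply_ne_zero] using
        (Finsupp.support_single_subset (by rwa [AddMonoidAlgebra.coeff_single] at hl))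
    simp [this]

lemma MinS.mul {f g : MvLaurent R n} {mf mg}
    (hf : MinS f mf) (hg : MinS g mg) : MinS (f * g) (mf + mg) := by
  have key : (f * g).coeff (mf + mg) = f.coeff mf * g.coeff mg := by
    rw [AddMonoidAlgebra.coeff_mul]
    simp only [Finsupp.sum]
    rw [Finset.sum_eq_single mf]
    · rw [Finset.sum_eq_single mg]
      · simp
      · intro b hb hne
        rw [if_neg]
        intro hc
        exact hne (add_left_cancel hc)
      · intro hmg; exact absurd hg.1 hmg
    · intro a ha hne
      apply Finset.sum_eq_zero
      intro b hb
      rw [if_neg]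
      intro hab
      have h1 : toLex mf < toLex a :=
        lt_of_le_of_ne (hf.2 a ha) (fun h => hne (toLex.injective h).symm)
      have h2 : toLex mg ≤ toLex b := hg.2 b hb
      have h3 : toLex mf + toLex mg < toLex a + toLex b := add_lt_add_of_lt_of_le h1 h2
      have h4 : toLex a + toLex b = toLex mf + toLex mg := by
        show toLex (a + b) = toLex (mf + mg)
        rw [hab]
      rw [h4] at h3
      exact lt_irrefl _ h3
    · intro hmf; exact absurd hf.1 hmf
  constructor
  · rw [Finsupp.mem_support_iff, key]
    exact mul_ne_zero (Finsupp.mem_support_iff.mp hf.1) (Finsupp.mem_support_iff.mp hg.1)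
  · intro l hl
    have := AddMonoidAlgebra.support_coeff_mul_subset f g hl
    rw [Finset.mem_add] at this
    obtain ⟨p, hp, q, hq, rfl⟩ := this
    exact add_le_add (hf.2 p hp) (hg.2 q hq)

lemma minS_one : MinS (1 : MvLaurent R n) 0 :=
  minS_single 0 one_ne_zero

lemma MinS.pow {f : MvLaurent R n} {m} (h : MinS f m) (k : ℕ) :
    MinS (f ^ k) (k • m) := by
  induction k with
  | zero => simpa using minS_one
  | succ k ih =>
    rw [pow_succ, succ_nsmul]
    exact ih.mul h

lemma MinS.prod {ι : Type*} (s : Finset ι) (f : ι → MvLaurent R n)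
    (m : ι → Fin n →₀ ℤ) (h : ∀ i ∈ s, MinS (f i) (m i)) :
    MinS (∏ i ∈ s, f i) (∑ i ∈ s, m i) := by
  induction s using Finset.cons_induction with
  | empty => simpa using minS_one
  | cons i s his ih =>
    rw [Finset.prod_cons, Finset.sum_cons]
    exact (h i (Finset.mem_cons_self i s)).mul (ih fun j hj => h j (Finset.mem_cons.mpr (Or.inr hj)))

lemma minS_polyToLaurent (p : MvPolynomial (Fin n) R) (w : Fin n →₀ ℕ)
    (hw : w ∈ p.support) (hmin : ∀ m ∈ p.support, toLex w ≤ toLex m) :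
    MinS (polyToLaurent R n p) (natToInt w) := by
  have hrepr : (polyToLaurent R n p).coeff = Finsupp.mapDomain natToInt (AddMonoidAlgebra.coeff p) := rfl
  have hsupp : (polyToLaurent R n p).coeff.support = p.support.image natToInt := by
    rw [hrepr]; exact Finsupp.mapDomain_support_of_injective natToInt_injective (AddMonoidAlgebra.coeff p)
  constructor
  · rw [hsupp]; exact Finset.mem_image_of_mem _ hw
  · intro l hl
    rw [hsupp, Finset.mem_image] at hl
    obtain ⟨m, hm, rfl⟩ := hl
    exact natToInt_lexMono (hmin m hm)

end MS

/-- The predicted lex-minimal exponent of the standard monomial `x^{(a)}`. -/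
noncomputable def muExp {n : ℕ} (v : Fin n → (Fin n →₀ ℕ)) (a : Fin n → ℤ) : Fin n →₀ ℤ :=
  ∑ i : Fin n, if 0 ≤ a i then (a i).toNat • Finsupp.single i (1 : ℤ)
    else (-(a i)).toNat • (natToInt (v i) + Finsupp.single i (-1))

lemma muExp_apply {n : ℕ} (v : Fin n → (Fin n →₀ ℕ)) (a : Fin n → ℤ) (j : Fin n) :
    muExp v a j = a j + ∑ i : Fin n, (if a i < 0 then (-(a i)) * ((v i) j : ℤ) else 0) := by
  have hco : muExp v a j = ∑ i : Fin n,
      ((if 0 ≤ a i then (a i).toNat • Finsupp.single i (1 : ℤ)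
        else (-(a i)).toNat • (natToInt (v i) + Finsupp.single i (-1))) j) := by
    rw [muExp, Finsupp.finset_sum_apply]
  rw [hco]
  have tval : ∀ i : Fin n,
      ((if 0 ≤ a i then (a i).toNat • Finsupp.single i (1 : ℤ)
        else (-(a i)).toNat • (natToInt (v i) + Finsupp.single i (-1))) j)
      = (if i = j then a i else 0) + (if a i < 0 then (-(a i)) * ((v i) j : ℤ) else 0) := by
    intro i
    by_cases hi : 0 ≤ a i
    · rw [if_pos hi, if_neg (not_lt.mpr hi)]
      rw [Finsupp.smul_apply, Finsupp.single_apply]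
      have hcast : ((a i).toNat • (if i = j then (1:ℤ) else 0)) =
          ((a i).toNat : ℤ) * (if i = j then (1:ℤ) else 0) := nsmul_eq_mul _ _
      rw [hcast, Int.toNat_of_nonneg hi]
      split_ifs <;> ring
    · rw [if_neg hi, if_pos (not_le.mp hi)]
      rw [Finsupp.smul_apply, Finsupp.add_apply, Finsupp.single_apply, natToInt_apply]
      have hcast : ((-(a i)).toNat • (((v i) j : ℤ) + if i = j then (-1:ℤ) else 0)) =
          ((-(a i)).toNat : ℤ) * (((v i) j : ℤ) + if i = j then (-1:ℤ) else 0) := nsmul_eq_mul _ _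
      rw [hcast, Int.toNat_of_nonneg (by omega : (0:ℤ) ≤ -(a i))]
      split_ifs <;> ring
  rw [Finset.sum_congr rfl (fun i _ => tval i), Finset.sum_add_distrib]
  congr 1
  simp [Finset.sum_ite_eq']

lemma muExp_strictMono {n : ℕ} {v : Fin n → (Fin n →₀ ℕ)}
    (hvform : ∀ j, ∀ i ≤ j, v j i = 0) {a a' : Fin n → ℤ}
    (h : toLex a < toLex a') : toLex (muExp v a) < toLex (muExp v a') := by
  obtain ⟨k, hpre, hk⟩ := h
  have hpre' : ∀ d, d < k → a d = a' d := hpre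
  have hk' : a k < a' k := hk
  have sums : ∀ j : Fin n, j ≤ k →
      (∑ i : Fin n, (if a i < 0 then (-(a i)) * ((v i) j : ℤ) else 0)) =
      (∑ i : Fin n, (if a' i < 0 then (-(a' i)) * ((v i) j : ℤ) else 0)) := by
    intro j hj
    apply Finset.sum_congr rfl
    intro i _
    by_cases hv : (v i) j = 0
    · simp [hv]
    · have hij : i < j := by
        by_contra hge
        exact hv (hvform i j (not_lt.mp hge))
      have : a i = a' i := hpre' i (lt_of_lt_of_le hij hj)
      rw [this]
  refine ⟨k, fun d hd => ?_, ?_⟩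
  · show muExp v a d = muExp v a' d
    rw [muExp_apply, muExp_apply, hpre' d hd, sums d (le_of_lt hd)]
  · show muExp v a k < muExp v a' k
    rw [muExp_apply, muExp_apply, sums k le_rfl]
    exact add_lt_add_of_lt_of_le hk' le_rfl

/-- Under `F̂_j = F_j` and the hypothesis that the lex-smallest monomial of
each `F_j` only involves the variables `x_i` with `i > j` (so it is `1` for `j = n`), every
standard monomial `x^{(a)}` is a nonzero Laurent polynomial, and if `a ≺ a'` lexicographically
then the lex-smallest monomial of `x^{(a)}` strictly precedes that of `x^{(a')}`. -/
theorem statement8 {R : Type*} [CommRing R] [IsDomain R] [UniqueFactorizationMonoid R]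
    {n : ℕ} [NeZero n]
    (F : Fin n → MvPolynomial (Fin n) R)
    -- `F j` does not involve `x_j`
    (hFx : ∀ j, ∀ m ∈ (F j).support, m j = 0)
    -- each `F j` is irreducible in `R[x_1,…,x_n]`
    (hFirr : ∀ j, Irreducible (F j))
    -- no `F j` is divisible by a variable
    (hFvar : ∀ j i, ¬ (MvPolynomial.X i ∣ F j))
    -- `x'_j = F_j / x_j = F_j · x_j^{-1}` as a Laurent polynomial (encoding `F̂_j = F_j`)
    (x' : Fin n → MvLaurent R n)
    (hx' : ∀ j, x' j =
      polyToLaurent R n (F j) * AddMonoidAlgebra.single (Finsupp.single j (-1 : ℤ)) (1 : R))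
    -- `v j` is the lexicographically smallest monomial of `F j`
    (v : Fin n → (Fin n →₀ ℕ))
    (hvmem : ∀ j, v j ∈ (F j).support)
    (hvmin : ∀ j, ∀ m ∈ (F j).support, toLex (v j) ≤ toLex m)
    -- and it only involves the variables `x_i` with `i > j`
    (hvform : ∀ j, ∀ i ≤ j, v j i = 0) :
    (∀ a : Fin n → ℤ, stdMonL x' a ≠ 0) ∧
    (∀ a a' : Fin n → ℤ, toLex a < toLex a' →
      ∀ m m' : Fin n →₀ ℤ,
        (m ∈ (stdMonL x' a).coeff.support ∧ ∀ l ∈ (stdMonL x' a).coeff.support, toLex m ≤ toLex l) →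
        (m' ∈ (stdMonL x' a').coeff.support ∧ ∀ l ∈ (stdMonL x' a').coeff.support, toLex m' ≤ toLex l) →
        toLex m < toLex m') := by
  have hminS : ∀ a : Fin n → ℤ, MinS (stdMonL x' a) (muExp v a) := by
    intro a
    apply MinS.prod
    intro i _
    by_cases hi : 0 ≤ a i
    · rw [if_pos hi, if_pos hi]
      exact (minS_single (Finsupp.single i (1 : ℤ)) (one_ne_zero)).pow _
    · rw [if_neg hi, if_neg hi]
      have h1 : MinS (polyToLaurent R n (F i)) (natToInt (v i)) :=
        minS_polyToLaurent _ _ (hvmem i) (hvmin i)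
      have h2 : MinS (x' i) (natToInt (v i) + Finsupp.single i (-1 : ℤ)) := by
        rw [hx' i]
        exact h1.mul (minS_single _ one_ne_zero)
      exact h2.pow _
  constructor
  · intro a
    exact (hminS a).ne_zero
  · intro a a' hlt m m' hm hm'
    have e1 : m = muExp v a := MinS.unique hm (hminS a)
    have e2 : m' = muExp v a' := MinS.unique hm' (hminS a')
    rw [e1, e2]
    exact muExp_strictMono hvform hlt
end
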